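/- Let X be a countable uniformly discrete metric space and let G be a countable discrete group equipped with a proper left-invariant metric d_G. Then X admits a uniform embedding into G if and only if there exist an increasing sequence X_1 ⊆ X_2 ⊆ ⋯ of finite subsets of X with ⋃_i X_i = X and maps φ_i : X_i → G which are uniform embeddings uniformly in i, meaning: for every R > 0 there exists S > 0 such that for all i and all x, y ∈ X_i, d(x,y) ≤ R implies d_G(φ_i(x), φ_i(y)) ≤ S, and d_G(φ_i(x), φ_i(y)) ≤ R implies d(x,y) ≤ S. (Equivalently: X is uniformly embeddable in G if and only if X is locally uniformly embeddable in G.) -/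
import Mathlib


open Metric

def UniformlyDiscrete (X : Type*) [MetricSpace X] : Prop :=
  ∃ δ > (0:ℝ), ∀ x y : X, x ≠ y → δ ≤ dist x y

def IsUniformEmbeddingMap {X Y : Type*} [MetricSpace X] [MetricSpace Y]
    (f : X → Y) : Prop :=
  (∀ R > (0:ℝ), ∃ S > (0:ℝ), ∀ x y : X, dist x y ≤ R → dist (f x) (f y) ≤ S) ∧
  (∀ R > (0:ℝ), ∃ S > (0:ℝ), ∀ x y : X, dist (f x) (f y) ≤ R → dist x y ≤ S)

lemma ultra_const {α : Type*} (U : Ultrafilter ℕ) (f : ℕ → α) {s : Set α}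
    (hs : s.Finite) (h : ∀ᶠ i in U, f i ∈ s) : ∃ a, ∀ᶠ i in U, f i = a := by
  have hsub : {i | f i ∈ s} ⊆ ⋃ a ∈ s, {i | f i = a} := by
    intro i hi
    simp only [Set.mem_iUnion, Set.mem_setOf_eq]
    exact ⟨f i, hi, rfl⟩
  have hU : (⋃ a ∈ s, {i | f i = a}) ∈ U := Filter.mem_of_superset h hsub
  obtain ⟨a, _, ha⟩ := (Ultrafilter.finite_biUnion_mem_iff hs).mp hU
  exact ⟨a, ha⟩

theorem stmt14 (X : Type) [MetricSpace X] [Countable X]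
    (hud : UniformlyDiscrete X)
    (G : Type) [Group G] [Countable G] [MetricSpace G]
    (hinv : ∀ g x y : G, dist (g * x) (g * y) = dist x y)
    (hproper : ∀ (x : G) (r : ℝ), (closedBall x r).Finite) :
    (∃ ψ : X → G, IsUniformEmbeddingMap ψ) ↔
    (∃ Xi : ℕ → Finset X,
      (∀ i j : ℕ, i ≤ j → Xi i ⊆ Xi j) ∧
      (∀ x : X, ∃ i : ℕ, x ∈ Xi i) ∧
      ∃ φ : ∀ i : ℕ, {x : X // x ∈ Xi i} → G,
        (∀ R > (0:ℝ), ∃ S > (0:ℝ), ∀ (i : ℕ) (x y : {x : X // x ∈ Xi i}),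
          dist x.1 y.1 ≤ R → dist (φ i x) (φ i y) ≤ S) ∧
        (∀ R > (0:ℝ), ∃ S > (0:ℝ), ∀ (i : ℕ) (x y : {x : X // x ∈ Xi i}),
          dist (φ i x) (φ i y) ≤ R → dist x.1 y.1 ≤ S)) := by
  classical
  constructor
  · rintro ⟨ψ, hub, hdb⟩
    by_cases hX : Nonempty X
    · obtain ⟨e, he⟩ := exists_surjective_nat X
      refine ⟨fun i => (Finset.range (i+1)).image e, ?_, ?_, fun i x => ψ x.1, ?_, ?_⟩
      · intro i j hij
        exact Finset.image_subset_image (Finset.range_subset_range.mpr (Nat.succ_le_succ hij))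
      · intro x
        obtain ⟨n, rfl⟩ := he x
        exact ⟨n, Finset.mem_image.mpr ⟨n, Finset.mem_range.mpr (Nat.lt_succ_self n), rfl⟩⟩
      · intro R hR
        obtain ⟨S, hS0, hS⟩ := hub R hR
        exact ⟨S, hS0, fun i x y h => hS x.1 y.1 h⟩
      · intro R hR
        obtain ⟨S, hS0, hS⟩ := hdb R hR
        exact ⟨S, hS0, fun i x y h => hS x.1 y.1 h⟩
    · refine ⟨fun _ => ∅, fun _ _ _ => le_refl _, fun x => (hX ⟨x⟩).elim,
        fun i x => (hX ⟨x.1⟩).elim, ?_, ?_⟩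
      · exact fun R hR => ⟨1, one_pos, fun i x y _ => (hX ⟨x.1⟩).elim⟩
      · exact fun R hR => ⟨1, one_pos, fun i x y _ => (hX ⟨x.1⟩).elim⟩
  · rintro ⟨Xi, hmono, hcover, φ, hup, hdown⟩
    by_cases hX : Nonempty X
    swap
    · refine ⟨fun x => (hX ⟨x⟩).elim, ?_, ?_⟩
      · exact fun R hR => ⟨1, one_pos, fun x => (hX ⟨x⟩).elim⟩
      · exact fun R hR => ⟨1, one_pos, fun x => (hX ⟨x⟩).elim⟩
    obtain ⟨x0⟩ := hX
    set U : Ultrafilter ℕ := Filter.hyperfilter ℕ with hUdef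
    -- membership sets are eventually
    have hmem : ∀ x : X, ∀ᶠ i in U, x ∈ Xi i ∧ x0 ∈ Xi i := by
      intro x
      obtain ⟨ix, hix⟩ := hcover x
      obtain ⟨i0, hi0⟩ := hcover x0
      have hsub : Set.Ici (max ix i0) ⊆ {i | x ∈ Xi i ∧ x0 ∈ Xi i} := by
        intro i hi
        exact ⟨hmono ix i (le_trans (le_max_left _ _) hi) hix,
          hmono i0 i (le_trans (le_max_right _ _) hi) hi0⟩
      have hcofin : Set.Ici (max ix i0) ∈ U := by
        apply Filter.mem_hyperfilter_of_finite_compl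
        simpa using Set.finite_Iio (max ix i0)
      exact Filter.mem_of_superset hcofin hsub
    classical
    set g : ℕ → X → G := fun i x =>
      if h : x ∈ Xi i ∧ x0 ∈ Xi i then (φ i ⟨x0, h.2⟩)⁻¹ * φ i ⟨x, h.1⟩ else 1
      with hgdef
    -- key: on the good set, dist (g i x) (g i y) = dist (φ i x) (φ i y)
    have hgdist : ∀ (i : ℕ) (x y : X) (hx : x ∈ Xi i) (hy : y ∈ Xi i) (h0 : x0 ∈ Xi i),
        dist (g i x) (g i y) = dist (φ i ⟨x, hx⟩) (φ i ⟨y, hy⟩) := by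
      intro i x y hx hy h0
      simp only [hgdef, dif_pos (And.intro hx h0), dif_pos (And.intro hy h0)]
      exact hinv _ _ _
    have hpsi : ∀ x : X, ∃ a : G, ∀ᶠ i in U, g i x = a := by
      intro x
      obtain ⟨S, hS0, hS⟩ := hup (dist x x0 + 1) (by positivity)
      refine ultra_const U (fun i => g i x) (hproper 1 S) ?_
      filter_upwards [hmem x] with i hi
      have : dist (g i x) (g i x0) ≤ S := by
        rw [hgdist i x x0 hi.1 hi.2 hi.2]
        exact hS i _ _ (by linarith [dist_nonneg (x := x) (y := x0)])
      have hgx0 : g i x0 = 1 := by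
        simp [hgdef, dif_pos (And.intro hi.2 hi.2)]
      rw [hgx0] at this
      exact mem_closedBall.mpr this
    choose ψ hψ using hpsi
    refine ⟨ψ, ?_, ?_⟩
    · intro R hR
      obtain ⟨S, hS0, hS⟩ := hup R hR
      refine ⟨S, hS0, fun x y hxy => ?_⟩
      obtain ⟨i, hgx, hgy, hx, hy⟩ :=
        ((hψ x).and ((hψ y).and ((hmem x).and (hmem y)))).exists
      rw [← hgx, ← hgy, hgdist i x y hx.1 hy.1 hx.2]
      exact hS i _ _ hxy
    · intro R hR
      obtain ⟨S, hS0, hS⟩ := hdown R hR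
      refine ⟨S, hS0, fun x y hxy => ?_⟩
      obtain ⟨i, hgx, hgy, hx, hy⟩ :=
        ((hψ x).and ((hψ y).and ((hmem x).and (hmem y)))).exists
      refine hS i ⟨x, hx.1⟩ ⟨y, hy.1⟩ ?_
      rw [← hgdist i x y hx.1 hy.1 hx.2, hgx, hgy]
      exact hxy
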